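/- If the socially optimal routing of an oligopoly pricing game is competitive (it assigns positive flow to at least two relays), then the game has an inefficient equilibrium: there exists an equilibrium (in fact a monopolistic one) whose induced routing is not the socially optimal routing. -/

import Mathlib

open Finset MeasureTheory intervalIntegral Set

/-- Virtual-competitor cost function: the minimal total cost of splitting traffic `t`
among the relays other than `i`, given pricing functions `B`. -/
noncomputable def Bhat (N : ℕ) (B : Fin N → ℝ → ℝ) (i : Fin N) (t : ℝ) : ℝ :=
  sInf {c : ℝ | ∃ g : Fin N → ℝ, (∀ j, 0 ≤ g j) ∧
    (∑ j ∈ Finset.univ.erase i, g j) = t ∧ c = ∑ j ∈ Finset.univ.erase i, B j (g j)}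

/-- A routing of total rate `Rs` among `N` relays. -/
def IsRouting (N : ℕ) (Rs : ℝ) (f : Fin N → ℝ) : Prop :=
  (∀ i, 0 ≤ f i) ∧ (∑ i, f i) = Rs

/-- The network cost of a routing. -/
noncomputable def totalCost (N : ℕ) (lam : Fin N → ℝ → ℝ) (f : Fin N → ℝ) : ℝ :=
  ∑ i, ∫ r in (0:ℝ)..(f i), lam i r

/-- The socially optimal routing: a routing of minimum cost. -/
def IsSociallyOptimal (N : ℕ) (Rs : ℝ) (lam : Fin N → ℝ → ℝ) (f : Fin N → ℝ) : Prop :=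
  IsRouting N Rs f ∧ ∀ g, IsRouting N Rs g → totalCost N lam f ≤ totalCost N lam g

/-- An oligopoly pricing game: at least two relays, positive rate, and marginal cost
functions that are positive, continuous and strictly increasing on `[0, Rs]`. -/
def IsOligopoly (N : ℕ) (Rs : ℝ) (lam : Fin N → ℝ → ℝ) : Prop :=
  2 ≤ N ∧ 0 < Rs ∧ ∀ i,
    (∀ t ∈ Set.Icc (0:ℝ) Rs, 0 < lam i t) ∧
    ContinuousOn (lam i) (Set.Icc 0 Rs) ∧
    StrictMonoOn (lam i) (Set.Icc 0 Rs)

/-- A pricing profile: each relay's pricing function is continuous, nondecreasing,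
and vanishes at `0`. -/
def IsPricingProfile (N : ℕ) (Rs : ℝ) (B : Fin N → ℝ → ℝ) : Prop :=
  ∀ i, ContinuousOn (B i) (Set.Icc 0 Rs) ∧ MonotoneOn (B i) (Set.Icc 0 Rs) ∧ B i 0 = 0

/-- Equilibrium of the oligopoly pricing game. -/
def IsEquilibrium (N : ℕ) (Rs : ℝ) (lam B : Fin N → ℝ → ℝ) (f : Fin N → ℝ) : Prop :=
  IsPricingProfile N Rs B ∧ IsRouting N Rs f ∧
  (∀ g, IsRouting N Rs g → (∑ i, B i (f i)) ≤ ∑ i, B i (g i)) ∧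
  (∀ i, ∀ t ∈ Set.Icc (0:ℝ) Rs, Bhat N B i Rs - Bhat N B i (Rs - t) ≤ B i t) ∧
  (∀ i, B i (f i) = Bhat N B i Rs - Bhat N B i (Rs - f i)) ∧
  (∀ i, ∀ t ∈ Set.Icc (0:ℝ) Rs,
    Bhat N B i Rs - Bhat N B i (Rs - t) - (∫ r in (0:ℝ)..t, lam i r) ≤
    Bhat N B i Rs - Bhat N B i (Rs - f i) - ∫ r in (0:ℝ)..(f i), lam i r)

/-- A function having one-sided derivatives: a right derivative at every point of
`[0, Rs)` and a left derivative at every point of `(0, Rs]`. -/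
def HasOneSidedDerivs (Rs : ℝ) (F : ℝ → ℝ) : Prop :=
  (∀ t ∈ Set.Ico (0:ℝ) Rs, ∃ d, HasDerivWithinAt F d (Set.Ici t) t) ∧
  (∀ t ∈ Set.Ioc (0:ℝ) Rs, ∃ d, HasDerivWithinAt F d (Set.Iic t) t)

lemma min_add_le' (C P a b : ℝ) (hC : 0 ≤ C) (hP : 0 ≤ P) (ha : 0 ≤ a) (hb : 0 ≤ b) :
    min (C * a + C * b) P ≤ min (C * a) P + min (C * b) P := by
  have h1 : 0 ≤ min (C * a) P := le_min (mul_nonneg hC ha) hP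
  have h2 : 0 ≤ min (C * b) P := le_min (mul_nonneg hC hb) hP
  rcases le_total (C * a) P with h | h
  · rcases le_total (C * b) P with h' | h'
    · rw [min_eq_left h, min_eq_left h']
      exact min_le_left _ _
    · rw [min_eq_right h']
      have := min_le_right (C * a + C * b) P
      linarith
  · rw [min_eq_right h]
    have := min_le_right (C * a + C * b) P
    linarith

lemma min_sum_le' {N : ℕ} (C P : ℝ) (hC : 0 ≤ C) (hP : 0 ≤ P) (g : Fin N → ℝ)
    (hg : ∀ j, 0 ≤ g j) (s : Finset (Fin N)) :
    min (C * ∑ j ∈ s, g j) P ≤ ∑ j ∈ s, min (C * g j) P := by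
  classical
  induction s using Finset.induction_on with
  | empty => simp [min_eq_left hP]
  | insert a s hns ih =>
      rw [Finset.sum_insert hns, Finset.sum_insert hns, mul_add]
      calc min (C * g a + C * ∑ j ∈ s, g j) P
          ≤ min (C * g a) P + min (C * ∑ j ∈ s, g j) P :=
            min_add_le' C P _ _ hC hP (hg a) (Finset.sum_nonneg fun j _ => hg j)
        _ ≤ min (C * g a) P + ∑ j ∈ s, min (C * g j) P := by linarith

lemma Bhat_eq' {N : ℕ} (hN : 2 ≤ N) (C P : ℝ) (hC : 0 ≤ C) (hP : 0 ≤ P) (i : Fin N)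
    (t : ℝ) (ht : 0 ≤ t) :
    Bhat N (fun _ x => min (C * x) P) i t = min (C * t) P := by
  classical
  have hcard : (Finset.univ.erase i).Nonempty := by
    rw [← Finset.card_pos, Finset.card_erase_of_mem (Finset.mem_univ i), Finset.card_univ,
      Fintype.card_fin]
    omega
  obtain ⟨j0, hj0⟩ := hcard
  set g0 : Fin N → ℝ := fun j => if j = j0 then t else 0 with hg0
  have hmem : min (C * t) P ∈ {c : ℝ | ∃ g : Fin N → ℝ, (∀ j, 0 ≤ g j) ∧
      (∑ j ∈ Finset.univ.erase i, g j) = t ∧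
      c = ∑ j ∈ Finset.univ.erase i, (fun _ x => min (C * x) P) j (g j)} := by
    refine ⟨g0, fun j => ?_, ?_, ?_⟩
    · simp only [hg0]
      split <;> simp [ht]
    · simp only [hg0]
      rw [Finset.sum_ite_eq' _ j0, if_pos hj0]
    · have hterm : ∀ j ∈ Finset.univ.erase i,
          (fun _ x => min (C * x) P) j (g0 j) = if j = j0 then min (C * t) P else 0 := by
        intro j _
        by_cases h : j = j0 <;> simp [hg0, h, min_eq_left hP]
      rw [Finset.sum_congr rfl hterm, Finset.sum_ite_eq' _ j0, if_pos hj0]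
  apply le_antisymm
  · apply csInf_le
    · refine ⟨0, fun c hc => ?_⟩
      obtain ⟨g, hg, hsum, rfl⟩ := hc
      exact Finset.sum_nonneg fun j _ => le_min (mul_nonneg hC (hg j)) hP
    · exact hmem
  · refine le_csInf ⟨_, hmem⟩ fun c hc => ?_
    obtain ⟨g, hg, hsum, rfl⟩ := hc
    calc min (C * t) P = min (C * ∑ j ∈ Finset.univ.erase i, g j) P := by rw [hsum]
      _ ≤ ∑ j ∈ Finset.univ.erase i, min (C * g j) P := min_sum_le' C P hC hP g hg _


/-- If the socially optimal routing is competitive, then there exists an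
inefficient (in fact monopolistic) equilibrium. -/
theorem inefficient_equilibrium_exists
    (N : ℕ) (Rs : ℝ) (lam : Fin N → ℝ → ℝ) (ropt : Fin N → ℝ)
    (holig : IsOligopoly N Rs lam)
    (hopt : IsSociallyOptimal N Rs lam ropt)
    (hcompetitive : ∃ i j, i ≠ j ∧ 0 < ropt i ∧ 0 < ropt j) :
    ∃ (B : Fin N → ℝ → ℝ) (f : Fin N → ℝ) (m : Fin N),
      IsEquilibrium N Rs lam B f ∧ f m = Rs ∧ f ≠ ropt := by
  classical
  obtain ⟨hN, hRs, hlam⟩ := holig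
  obtain ⟨i1, j1, hij1, hri1, hrj1⟩ := hcompetitive
  have hpos : ∀ i, ∀ t ∈ Set.Icc (0:ℝ) Rs, 0 < lam i t := fun i => (hlam i).1
  have hcont : ∀ i, ContinuousOn (lam i) (Set.Icc 0 Rs) := fun i => (hlam i).2.1
  have hsm : ∀ i, StrictMonoOn (lam i) (Set.Icc 0 Rs) := fun i => (hlam i).2.2
  set C : ℝ := 1 + ∑ j, lam j Rs with hCdef
  have hRsmem : Rs ∈ Set.Icc (0:ℝ) Rs := ⟨hRs.le, le_refl _⟩
  have hlamRs : ∀ i, 0 ≤ lam i Rs := fun i => (hpos i Rs hRsmem).le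
  have hCi : ∀ i, ∀ x ∈ Set.Icc (0:ℝ) Rs, lam i x ≤ C := by
    intro i x hx
    have h1 : lam i x ≤ lam i Rs := by
      rcases eq_or_lt_of_le hx.2 with h | h
      · rw [h]
      · exact ((hsm i).monotoneOn hx hRsmem hx.2)
    have h2 : lam i Rs ≤ ∑ j, lam j Rs :=
      Finset.single_le_sum (fun j _ => hlamRs j) (Finset.mem_univ i)
    simp only [hCdef]; linarith
  have hC : (0:ℝ) ≤ C := by
    have : (0:ℝ) ≤ ∑ j, lam j Rs := Finset.sum_nonneg fun j _ => hlamRs j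
    simp only [hCdef]; linarith
  -- integrability and integral estimates
  have hInt : ∀ i, ∀ a b : ℝ, 0 ≤ a → a ≤ b → b ≤ Rs →
      IntervalIntegrable (lam i) MeasureTheory.volume a b := by
    intro i a b ha hab hb
    apply ContinuousOn.intervalIntegrable
    apply (hcont i).mono
    rw [Set.uIcc_of_le hab]
    exact Set.Icc_subset_Icc ha hb
  have hsplit : ∀ i, ∀ a b : ℝ, 0 ≤ a → a ≤ b → b ≤ Rs →
      (∫ r in (0:ℝ)..b, lam i r) - (∫ r in (0:ℝ)..a, lam i r) = ∫ r in a..b, lam i r := by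
    intro i a b ha hab hb
    rw [← intervalIntegral.integral_add_adjacent_intervals
      (hInt i 0 a le_rfl ha (le_trans hab hb)) (hInt i a b ha hab hb)]
    ring
  have hnnseg : ∀ i, ∀ a b : ℝ, 0 ≤ a → a ≤ b → b ≤ Rs →
      0 ≤ ∫ r in a..b, lam i r := by
    intro i a b ha hab hb
    apply intervalIntegral.integral_nonneg hab
    intro x hx
    exact (hpos i x ⟨le_trans ha hx.1, le_trans hx.2 hb⟩).le
  have hubseg : ∀ i, ∀ a b : ℝ, 0 ≤ a → a ≤ b → b ≤ Rs →
      (∫ r in a..b, lam i r) ≤ C * (b - a) := by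
    intro i a b ha hab hb
    calc (∫ r in a..b, lam i r) ≤ ∫ _ in a..b, C := by
          apply intervalIntegral.integral_mono_on hab (hInt i a b ha hab hb)
            intervalIntegrable_const
          intro x hx
          exact hCi i x ⟨le_trans ha hx.1, le_trans hx.2 hb⟩
      _ = C * (b - a) := by rw [intervalIntegral.integral_const, smul_eq_mul]; ring
  -- choose the monopolist
  obtain ⟨m, _, hm⟩ := Finset.exists_min_image Finset.univ
    (fun i => ∫ r in (0:ℝ)..Rs, lam i r) ⟨i1, Finset.mem_univ i1⟩
  set P : ℝ := ∫ r in (0:ℝ)..Rs, lam m r with hPdef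
  have hP0 : (0:ℝ) ≤ P := hnnseg m 0 Rs le_rfl hRs.le le_rfl
  have hPle : ∀ i, P ≤ ∫ r in (0:ℝ)..Rs, lam i r := fun i => hm i (Finset.mem_univ i)
  have hPRs : P ≤ C * Rs := by
    have := hubseg m 0 Rs le_rfl hRs.le le_rfl
    simpa using this
  set B : Fin N → ℝ → ℝ := fun _ x => min (C * x) P with hBdef
  set f : Fin N → ℝ := fun i => if i = m then Rs else 0 with hfdef
  have hfm : f m = Rs := by simp [hfdef]
  have hmin0 : min (C * (0:ℝ)) P = 0 := by rw [mul_zero, min_eq_left hP0]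
  have hminRs : min (C * Rs) P = P := min_eq_right hPRs
  have hBh : ∀ i, ∀ t : ℝ, 0 ≤ t → Bhat N B i t = min (C * t) P := by
    intro i t ht
    exact Bhat_eq' hN C P hC hP0 i t ht
  have hI0 : ∀ i, (∫ r in (0:ℝ)..(0:ℝ), lam i r) = 0 := fun i =>
    intervalIntegral.integral_same
  have hfRouting : IsRouting N Rs f := by
    constructor
    · intro i
      simp only [hfdef]
      split
      · exact hRs.le
      · exact le_refl 0
    · simp only [hfdef]
      rw [Finset.sum_ite_eq' Finset.univ m (fun _ => Rs), if_pos (Finset.mem_univ m)]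
  have hBf : ∀ i, B i (f i) = if i = m then P else 0 := by
    intro i
    by_cases h : i = m <;> simp [hBdef, hfdef, h, hminRs, hmin0]
  have hsumBf : (∑ i, B i (f i)) = P := by
    rw [Finset.sum_congr rfl fun i _ => hBf i,
      Finset.sum_ite_eq' Finset.univ m (fun _ => P), if_pos (Finset.mem_univ m)]
  refine ⟨B, f, m, ⟨?_, hfRouting, ?_, ?_, ?_, ?_⟩, hfm, ?_⟩
  · -- pricing profile
    intro i
    refine ⟨?_, ?_, ?_⟩
    · exact ((continuous_const.mul continuous_id).min continuous_const).continuousOn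
    · intro a _ b _ hab
      exact min_le_min (mul_le_mul_of_nonneg_left hab hC) le_rfl
    · simpa [hBdef] using hmin0
  · -- routing optimality
    intro g hg
    rw [hsumBf]
    calc P = min (C * Rs) P := hminRs.symm
      _ = min (C * ∑ i, g i) P := by rw [hg.2]
      _ ≤ ∑ i, min (C * g i) P := min_sum_le' C P hC hP0 g hg.1 _
      _ = ∑ i, B i (g i) := rfl
  · -- condition (iv)
    intro i t ht
    rw [hBh i Rs hRs.le, hBh i (Rs - t) (by linarith [ht.2]), hminRs]
    show P - min (C * (Rs - t)) P ≤ min (C * t) P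
    rcases le_total (C * (Rs - t)) P with h | h
    · rw [min_eq_left h]
      refine le_min ?_ (by nlinarith [mul_nonneg hC (sub_nonneg.2 ht.2)])
      nlinarith [hPRs]
    · rw [min_eq_right h, sub_self]
      exact le_min (mul_nonneg hC ht.1) hP0
  · -- condition (v)
    intro i
    by_cases h : i = m
    · subst h
      rw [hBh i Rs hRs.le, hfm, sub_self, hBh i 0 le_rfl, hmin0, hminRs, sub_zero]
      simp [hBdef, hminRs]
    · have hfi : f i = 0 := by simp [hfdef, h]
      rw [hfi, hBh i Rs hRs.le, sub_zero, hBh i Rs hRs.le]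
      simpa [hBdef] using hmin0
  · -- condition (vi)
    intro i t ht
    rw [hBh i Rs hRs.le, hBh i (Rs - t) (by linarith [ht.2]), hminRs]
    by_cases h : i = m
    · subst h
      rw [hfm, sub_self, hBh i 0 le_rfl, hmin0]
      show P - min (C * (Rs - t)) P - (∫ r in (0:ℝ)..t, lam i r) ≤
        P - 0 - ∫ r in (0:ℝ)..Rs, lam i r
      have hsub := hsplit i t Rs ht.1 ht.2 le_rfl
      have h1 : (∫ r in t..Rs, lam i r) ≤ C * (Rs - t) := hubseg i t Rs ht.1 ht.2 le_rfl
      have h2 : 0 ≤ ∫ r in (0:ℝ)..t, lam i r := by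
        have := hnnseg i 0 t le_rfl ht.1 ht.2
        simpa [hsplit i 0 t le_rfl ht.1 ht.2] using this
      have h3 : (∫ r in t..Rs, lam i r) ≤ min (C * (Rs - t)) P := by
        refine le_min h1 ?_
        have : (∫ r in (0:ℝ)..Rs, lam i r) = P := hPdef.symm
        linarith
      linarith
    · have hfi : f i = 0 := by simp [hfdef, h]
      rw [hfi, sub_zero, hBh i Rs hRs.le, hminRs, hI0 i]
      show P - min (C * (Rs - t)) P - (∫ r in (0:ℝ)..t, lam i r) ≤ P - P - 0
      have h2 : 0 ≤ ∫ r in (0:ℝ)..t, lam i r := by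
        have := hnnseg i 0 t le_rfl ht.1 ht.2
        simpa using this
      rcases le_total (C * (Rs - t)) P with h' | h'
      · rw [min_eq_left h']
        have hsub := hsplit i t Rs ht.1 ht.2 le_rfl
        have h1 : (∫ r in t..Rs, lam i r) ≤ C * (Rs - t) := hubseg i t Rs ht.1 ht.2 le_rfl
        have h4 : P ≤ ∫ r in (0:ℝ)..Rs, lam i r := hPle i
        linarith
      · rw [min_eq_right h']
        linarith
  · -- f ≠ ropt
    intro hfr
    set k : Fin N := if i1 = m then j1 else i1 with hk
    have hkm : k ≠ m := by
      simp only [hk]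
      split
      · rename_i h; rw [← h]; exact hij1.symm
      · assumption
    have hrk : 0 < ropt k := by
      simp only [hk]; split
      · exact hrj1
      · exact hri1
    have : f k = 0 := by simp [hfdef, hkm]
    rw [hfr] at this
    linarith
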